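/- Let ε > 0, n > 1/(8ε), p prime, and B = [X, Y, Z] a brick in H_n with |B| > p^(3n/2 + 3/4 + ε(2n+1)). Then there exist a, b ∈ F_pⁿ such that the entire coset [a, b, F_p] is contained in B·B. -/

import Mathlib

open scoped Pointwise

def Heis (p n : ℕ) : Type := (Fin n → ZMod p) × (Fin n → ZMod p) × ZMod p

namespace Heis

variable {p n : ℕ}

instance : Mul (Heis p n) :=
  ⟨fun a b => (a.1 + b.1, a.2.1 + b.2.1, (∑ i, a.1 i * b.2.1 i) + a.2.2 + b.2.2)⟩
instance : One (Heis p n) := ⟨((0 : Fin n → ZMod p), (0 : Fin n → ZMod p), (0 : ZMod p))⟩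
instance : Inv (Heis p n) :=
  ⟨fun a => (-a.1, -a.2.1, (∑ i, a.1 i * a.2.1 i) - a.2.2)⟩

lemma one_def : (1 : Heis p n) = ((0 : Fin n → ZMod p), (0 : Fin n → ZMod p), (0 : ZMod p)) := rfl

lemma inv_def (a : Heis p n) :
    a⁻¹ = (-a.1, -a.2.1, (∑ i, a.1 i * a.2.1 i) - a.2.2) := rfl

lemma mul_def (a b : Heis p n) :
    a * b = (a.1 + b.1, a.2.1 + b.2.1, (∑ i, a.1 i * b.2.1 i) + a.2.2 + b.2.2) := rfl

instance : Group (Heis p n) :=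
  Group.ofLeftAxioms
    (fun a b c => by
      rw [mul_def, mul_def, mul_def a, mul_def b]
      refine Prod.ext ?_ (Prod.ext ?_ ?_) <;>
        simp [Finset.sum_add_distrib, add_mul, mul_add] <;> ring)
    (fun a => by
      rw [mul_def, one_def]
      refine Prod.ext ?_ (Prod.ext ?_ ?_) <;>
        simp)
    (fun a => by
      rw [mul_def, inv_def, one_def]
      refine Prod.ext ?_ (Prod.ext ?_ ?_) <;>
        simp [Finset.sum_add_distrib, neg_mul, mul_comm] <;> ring)

instance [NeZero p] : Fintype (Heis p n) :=
  inferInstanceAs (Fintype ((Fin n → ZMod p) × (Fin n → ZMod p) × ZMod p))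

instance : DecidableEq (Heis p n) :=
  inferInstanceAs (DecidableEq ((Fin n → ZMod p) × (Fin n → ZMod p) × ZMod p))

end Heis


section Aux

open Finset ZMod

variable {p : ℕ} [Fact p.Prime]

local notation "ψ" => ZMod.stdAddChar (N := p)

private lemma pigeon (X : Finset (ZMod p)) :
    ∃ a : ZMod p, X.card ^ 2 ≤ p * (X.filter fun x => a - x ∈ X).card := by
  have hsum : ∑ a : ZMod p, (X.filter fun x => a - x ∈ X).card = X.card ^ 2 := by
    simp_rw [Finset.card_filter]
    rw [Finset.sum_comm]
    have : ∀ x ∈ X, (∑ a : ZMod p, if a - x ∈ X then 1 else 0) = X.card := by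
      intro x hx
      rw [Fintype.sum_equiv (Equiv.subRight x) _ (fun b => if b ∈ X then 1 else 0)
        (fun a => by simp [Equiv.subRight_apply])]
      simp [Finset.sum_ite_mem]
    rw [Finset.sum_congr rfl this]
    simp [sq, mul_comm]
  have hne : (Finset.univ : Finset (ZMod p)).Nonempty := Finset.univ_nonempty
  have hle : ∑ _a : ZMod p, X.card ^ 2 ≤
      ∑ a : ZMod p, p * (X.filter fun x => a - x ∈ X).card := by
    rw [← Finset.mul_sum, hsum, Finset.sum_const, Finset.card_univ, ZMod.card, smul_eq_mul]
  obtain ⟨a, -, ha⟩ := Finset.exists_le_of_sum_le hne hle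
  exact ⟨a, ha⟩

private lemma psi_norm (t : ZMod p) : ‖ψ t‖ = 1 := by
  rw [ZMod.stdAddChar_apply]
  rw [Circle.norm_coe]

private lemma psi_conj (t : ZMod p) : (starRingEnd ℂ) (ψ t) = ψ (-t) := by
  have h1 : ψ t * (starRingEnd ℂ) (ψ t) = 1 := by
    rw [Complex.mul_conj]
    norm_cast
    rw [Complex.normSq_eq_norm_sq]
    simp [psi_norm]
  have h2 : ψ t * ψ (-t) = 1 := by
    rw [← AddChar.map_add_eq_mul]; simp
  have hne : ψ t ≠ 0 := by
    intro h; have := psi_norm (p := p) t; rw [h] at this; simp at this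
  exact mul_left_cancel₀ hne (h1.trans h2.symm)

private lemma psi_sum (b : ZMod p) : ∑ x : ZMod p, ψ (x * b) = if b = 0 then (p : ℂ) else 0 := by
  have := AddChar.sum_mulShift b (ZMod.isPrimitive_stdAddChar p)
  rw [ZMod.card] at this
  rw [this]
  split_ifs <;> simp

/-- Parseval-type identity. -/
private lemma parseval (c : ZMod p) (hc : c ≠ 0) (B : Finset (ZMod p)) :
    ∑ x : ZMod p, ‖∑ y ∈ B, ψ (c * x * y)‖ ^ 2 = p * B.card := by
  have key : ∑ x : ZMod p, (∑ y ∈ B, ψ (c * x * y)) *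
      (starRingEnd ℂ) (∑ y ∈ B, ψ (c * x * y)) = (p : ℂ) * B.card := by
    have expand : ∀ x : ZMod p, (∑ y ∈ B, ψ (c * x * y)) *
        (starRingEnd ℂ) (∑ y ∈ B, ψ (c * x * y))
        = ∑ y ∈ B, ∑ y' ∈ B, ψ (x * (c * (y - y'))) := by
      intro x
      rw [map_sum, Finset.sum_mul_sum]
      refine Finset.sum_congr rfl fun y _ => Finset.sum_congr rfl fun y' _ => ?_
      rw [psi_conj, ← AddChar.map_add_eq_mul]
      ring_nf
    rw [Finset.sum_congr rfl fun x _ => expand x, Finset.sum_comm]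
    have inner : ∀ y y' : ZMod p, ∑ x : ZMod p, ψ (x * (c * (y - y')))
        = if y = y' then (p : ℂ) else 0 := by
      intro y y'
      rw [psi_sum]
      by_cases h : y = y' <;> simp [h, sub_eq_zero, hc]
    calc ∑ y ∈ B, ∑ x : ZMod p, ∑ y' ∈ B, ψ (x * (c * (y - y')))
        = ∑ y ∈ B, ∑ y' ∈ B, (if y = y' then (p:ℂ) else 0) := by
          refine Finset.sum_congr rfl fun y _ => ?_
          rw [Finset.sum_comm]
          exact Finset.sum_congr rfl fun y' _ => inner y y'
      _ = ∑ y ∈ B, (p : ℂ) := by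
          refine Finset.sum_congr rfl fun y hy => ?_
          rw [Finset.sum_ite_eq B y (fun _ => (p:ℂ))]
          simp [hy]
      _ = (p : ℂ) * B.card := by simp [mul_comm]
  have hx : ∀ x : ZMod p, ((‖∑ y ∈ B, ψ (c * x * y)‖ ^ 2 : ℝ) : ℂ)
      = (∑ y ∈ B, ψ (c * x * y)) * (starRingEnd ℂ) (∑ y ∈ B, ψ (c * x * y)) := by
    intro x
    rw [Complex.mul_conj]
    norm_cast
    rw [Complex.normSq_eq_norm_sq]
  have cast_eq : ((∑ x : ZMod p, ‖∑ y ∈ B, ψ (c * x * y)‖ ^ 2 : ℝ) : ℂ)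
      = ((p * B.card : ℝ) : ℂ) := by
    rw [Complex.ofReal_sum]
    rw [Finset.sum_congr rfl fun x _ => hx x, key]
    push_cast
    ring
  exact_mod_cast cast_eq

private lemma psi_prod {ι} (s : Finset ι) (f : ι → ZMod p) :
    ψ (∑ i ∈ s, f i) = ∏ i ∈ s, ψ (f i) := by
  classical
  induction s using Finset.cons_induction with
  | empty => simp
  | cons a s ha ih => rw [Finset.sum_cons, Finset.prod_cons, AddChar.map_add_eq_mul, ih]

private lemma parsevalZ (Z : Finset (ZMod p)) :
    ∑ c : ZMod p, ‖∑ z ∈ Z, ψ (c * z)‖ ^ 2 = p * Z.card := by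
  have h := parseval (p := p) 1 one_ne_zero Z
  simpa using h

private lemma bilinear_bound (c : ZMod p) (hc : c ≠ 0) (A B : Finset (ZMod p)) :
    ‖∑ x ∈ A, ∑ y ∈ B, ψ (c * x * y)‖ ^ 2 ≤ p * A.card * B.card := by
  have h1 : ‖∑ x ∈ A, ∑ y ∈ B, ψ (c * x * y)‖ ≤ ∑ x ∈ A, ‖∑ y ∈ B, ψ (c * x * y)‖ :=
    norm_sum_le _ _
  have h2 : (∑ x ∈ A, ‖∑ y ∈ B, ψ (c * x * y)‖) ^ 2
      ≤ A.card * ∑ x ∈ A, ‖∑ y ∈ B, ψ (c * x * y)‖ ^ 2 :=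
    sq_sum_le_card_mul_sum_sq
  have h3 : ∑ x ∈ A, ‖∑ y ∈ B, ψ (c * x * y)‖ ^ 2
      ≤ ∑ x : ZMod p, ‖∑ y ∈ B, ψ (c * x * y)‖ ^ 2 :=
    Finset.sum_le_sum_of_subset_of_nonneg (Finset.subset_univ A)
      (fun _ _ _ => by positivity)
  calc ‖∑ x ∈ A, ∑ y ∈ B, ψ (c * x * y)‖ ^ 2
      ≤ (∑ x ∈ A, ‖∑ y ∈ B, ψ (c * x * y)‖) ^ 2 := by
        apply pow_le_pow_left₀ (norm_nonneg _) h1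
    _ ≤ A.card * ∑ x ∈ A, ‖∑ y ∈ B, ψ (c * x * y)‖ ^ 2 := h2
    _ ≤ A.card * ∑ x : ZMod p, ‖∑ y ∈ B, ψ (c * x * y)‖ ^ 2 := by
        apply mul_le_mul_of_nonneg_left h3 (by positivity)
    _ = p * A.card * B.card := by rw [parseval c hc B]; ring

set_option maxHeartbeats 2000000 in
private lemma cover (n : ℕ) (A B : Fin n → Finset (ZMod p)) (Z : Finset (ZMod p))
    (hA : ∀ i, (A i).Nonempty) (hB : ∀ i, (B i).Nonempty) (hZ : Z.Nonempty)
    (hbig : (p : ℝ) ^ (n + 2) < (∏ i, ((A i).card : ℝ) * (B i).card) * (Z.card : ℝ) ^ 2)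
    (t : ZMod p) :
    ∃ g ∈ Fintype.piFinset (fun i => A i ×ˢ B i), ∃ z ∈ Z, ∃ z' ∈ Z,
      (∑ i, (g i).1 * (g i).2) + z + z' = t := by
  by_contra hcon
  push_neg at hcon
  -- the exponential sum
  set S : ZMod p → ℂ := fun c => ψ (-(c * t)) *
      (∏ i, ∑ u ∈ A i, ∑ v ∈ B i, ψ (c * u * v)) *
      (∑ z ∈ Z, ψ (c * z)) * (∑ z' ∈ Z, ψ (c * z')) with hS
  -- Step A: each S c is a sum over tuples, and the total is 0
  have hSc : ∀ c : ZMod p, S c = ∑ g ∈ Fintype.piFinset (fun i => A i ×ˢ B i),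
      ∑ z ∈ Z, ∑ z' ∈ Z, ψ (c * ((∑ i, (g i).1 * (g i).2) + z + z' - t)) := by
    intro c
    have hprod : (∏ i, ∑ u ∈ A i, ∑ v ∈ B i, ψ (c * u * v))
        = ∑ g ∈ Fintype.piFinset (fun i => A i ×ˢ B i), ∏ i, ψ (c * (g i).1 * (g i).2) := by
      calc ∏ i, ∑ u ∈ A i, ∑ v ∈ B i, ψ (c * u * v)
          = ∏ i, ∑ w ∈ A i ×ˢ B i, ψ (c * w.1 * w.2) := by
            exact Finset.prod_congr rfl fun i _ =>
              (Finset.sum_product (A i) (B i) (fun w => ψ (c * w.1 * w.2))).symm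
        _ = ∑ g ∈ Fintype.piFinset (fun i => A i ×ˢ B i),
              ∏ i, ψ (c * (g i).1 * (g i).2) := Finset.prod_univ_sum _ _
    have pointwise : ∀ g : Fin n → ZMod p × ZMod p, ∀ z z' : ZMod p,
        ψ (c * ((∑ i, (g i).1 * (g i).2) + z + z' - t))
        = ((ψ (-(c * t)) * ∏ i, ψ (c * (g i).1 * (g i).2)) * ψ (c * z)) * ψ (c * z') := by
      intro g z z'
      have hmulsum : ∑ i, c * (g i).1 * (g i).2 = c * ∑ i, (g i).1 * (g i).2 := by
        rw [Finset.mul_sum]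
        exact Finset.sum_congr rfl fun i _ => (mul_assoc _ _ _)
      have expand : c * ((∑ i, (g i).1 * (g i).2) + z + z' - t)
          = (((-(c * t)) + (∑ i, c * (g i).1 * (g i).2)) + (c * z)) + (c * z') := by
        rw [hmulsum]; ring
      rw [expand, AddChar.map_add_eq_mul, AddChar.map_add_eq_mul, AddChar.map_add_eq_mul,
        psi_prod]
    have per_g : ∀ g : Fin n → ZMod p × ZMod p,
        ∑ z ∈ Z, ∑ z' ∈ Z, ψ (c * ((∑ i, (g i).1 * (g i).2) + z + z' - t))
        = ((ψ (-(c * t)) * ∏ i, ψ (c * (g i).1 * (g i).2)) * (∑ z ∈ Z, ψ (c * z)))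
            * (∑ z' ∈ Z, ψ (c * z')) := by
      intro g
      calc ∑ z ∈ Z, ∑ z' ∈ Z, ψ (c * ((∑ i, (g i).1 * (g i).2) + z + z' - t))
          = ∑ z ∈ Z, ∑ z' ∈ Z,
              ((ψ (-(c * t)) * ∏ i, ψ (c * (g i).1 * (g i).2)) * ψ (c * z)) * ψ (c * z') :=
            Finset.sum_congr rfl fun z _ => Finset.sum_congr rfl fun z' _ =>
              pointwise g z z'
        _ = ∑ z ∈ Z, ((ψ (-(c * t)) * ∏ i, ψ (c * (g i).1 * (g i).2)) * ψ (c * z))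
              * (∑ z' ∈ Z, ψ (c * z')) :=
            Finset.sum_congr rfl fun z _ => (Finset.mul_sum _ _ _).symm
        _ = ∑ z ∈ Z, ((ψ (-(c * t)) * ∏ i, ψ (c * (g i).1 * (g i).2))
              * (∑ z' ∈ Z, ψ (c * z'))) * ψ (c * z) :=
            Finset.sum_congr rfl fun z _ => mul_right_comm _ _ _
        _ = ((ψ (-(c * t)) * ∏ i, ψ (c * (g i).1 * (g i).2)) * (∑ z' ∈ Z, ψ (c * z')))
              * (∑ z ∈ Z, ψ (c * z)) := (Finset.mul_sum _ _ _).symm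
        _ = ((ψ (-(c * t)) * ∏ i, ψ (c * (g i).1 * (g i).2)) * (∑ z ∈ Z, ψ (c * z)))
              * (∑ z' ∈ Z, ψ (c * z')) := mul_right_comm _ _ _
    have e1 : ψ (-(c * t)) * (∑ g ∈ Fintype.piFinset (fun i => A i ×ˢ B i),
        ∏ i, ψ (c * (g i).1 * (g i).2))
        = ∑ g ∈ Fintype.piFinset (fun i => A i ×ˢ B i),
          ψ (-(c * t)) * ∏ i, ψ (c * (g i).1 * (g i).2) := Finset.mul_sum _ _ _
    rw [hS]
    simp only [hprod]
    rw [e1, Finset.sum_mul, Finset.sum_mul]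
    exact Finset.sum_congr rfl fun g _ => (per_g g).symm
  have hT0 : ∑ c : ZMod p, S c = 0 := by
    rw [Finset.sum_congr rfl fun c _ => hSc c]
    rw [Finset.sum_comm]
    refine Finset.sum_eq_zero fun g hg => ?_
    rw [Finset.sum_comm]
    refine Finset.sum_eq_zero fun z hz => ?_
    rw [Finset.sum_comm]
    refine Finset.sum_eq_zero fun z' hz' => ?_
    have hne : (∑ i, (g i).1 * (g i).2) + z + z' - t ≠ 0 := by
      intro h
      exact hcon g hg z hz z' hz' (by linear_combination (h : _))
    have := psi_sum ((∑ i, (g i).1 * (g i).2) + z + z' - t)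
    rw [if_neg hne] at this
    rw [← this]
  -- Step B: the c = 0 term
  have hS0 : S 0 = (∏ i, ((A i).card : ℂ) * (B i).card) * (Z.card : ℂ) * Z.card := by
    rw [hS]
    simp only [zero_mul, neg_zero, AddChar.map_zero_eq_one, one_mul]
    simp [Finset.sum_const, mul_comm]
  -- abbreviations
  set R : ℝ := ∏ i, ((A i).card : ℝ) * (B i).card with hRdef
  set W : ℝ := (Z.card : ℝ) with hWdef
  have hR : 0 < R := by
    rw [hRdef]
    refine Finset.prod_pos fun i _ => ?_
    have h1 : 0 < (A i).card := Finset.card_pos.mpr (hA i)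
    have h2 : 0 < (B i).card := Finset.card_pos.mpr (hB i)
    positivity
  have hW : 0 < W := by
    rw [hWdef]; exact_mod_cast Finset.card_pos.mpr hZ
  have hp0 : (0:ℝ) < p := by exact_mod_cast (Fact.out : p.Prime).pos
  -- norm of the c = 0 term
  have h0norm : ‖S 0‖ = R * W ^ 2 := by
    have : S 0 = ((R * W ^ 2 : ℝ) : ℂ) := by
      rw [hS0, hRdef, hWdef]; push_cast; ring
    rw [this, Complex.norm_real, Real.norm_of_nonneg (by positivity)]
  -- split off the c = 0 term
  have hsplit : S 0 = -∑ c ∈ Finset.univ.erase (0 : ZMod p), S c := by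
    have h := Finset.add_sum_erase Finset.univ S (Finset.mem_univ (0 : ZMod p))
    rw [hT0] at h
    exact eq_neg_of_add_eq_zero_left h
  -- bound for each nonzero c
  have hnorm : ∀ c : ZMod p, c ≠ 0 → ‖S c‖ ≤
      Real.sqrt ((p : ℝ) ^ n * R) * ‖∑ z ∈ Z, ψ (c * z)‖ ^ 2 := by
    intro c hc
    have hprodle : ∏ i, ‖∑ u ∈ A i, ∑ v ∈ B i, ψ (c * u * v)‖
        ≤ Real.sqrt ((p : ℝ) ^ n * R) := by
      have hsq : (∏ i, ‖∑ u ∈ A i, ∑ v ∈ B i, ψ (c * u * v)‖) ^ 2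
          ≤ (p : ℝ) ^ n * R := by
        rw [← Finset.prod_pow]
        calc ∏ i, ‖∑ u ∈ A i, ∑ v ∈ B i, ψ (c * u * v)‖ ^ 2
            ≤ ∏ i, (p : ℝ) * (A i).card * (B i).card :=
              Finset.prod_le_prod (fun i _ => by positivity)
                (fun i _ => bilinear_bound c hc (A i) (B i))
          _ = ∏ i, ((p : ℝ) * (((A i).card : ℝ) * (B i).card)) :=
              Finset.prod_congr rfl fun i _ => by ring
          _ = (∏ _i : Fin n, (p : ℝ)) * ∏ i, ((A i).card : ℝ) * (B i).card :=
              Finset.prod_mul_distrib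
          _ = (p : ℝ) ^ n * R := by
              rw [Finset.prod_const, Finset.card_univ, Fintype.card_fin, hRdef]
      have h1 : (0:ℝ) ≤ ∏ i, ‖∑ u ∈ A i, ∑ v ∈ B i, ψ (c * u * v)‖ :=
        Finset.prod_nonneg fun i _ => norm_nonneg _
      exact (Real.le_sqrt h1 (by positivity)).mpr hsq
    have hna : ‖S c‖ = (∏ i, ‖∑ u ∈ A i, ∑ v ∈ B i, ψ (c * u * v)‖)
        * ‖∑ z ∈ Z, ψ (c * z)‖ ^ 2 := by
      rw [hS]
      rw [norm_mul, norm_mul, norm_mul, psi_norm, one_mul, norm_prod]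
      ring
    rw [hna]
    apply mul_le_mul_of_nonneg_right hprodle (by positivity)
  -- sum of z-norms over nonzero c
  have hzsum : ∑ c ∈ Finset.univ.erase (0 : ZMod p), ‖∑ z ∈ Z, ψ (c * z)‖ ^ 2
      ≤ (p : ℝ) * W := by
    rw [hWdef]
    rw [← parsevalZ Z]
    exact Finset.sum_le_sum_of_subset_of_nonneg
      (Finset.erase_subset _ _) (fun _ _ _ => by positivity)
  -- main inequality
  have hmain : R * W ^ 2 ≤ Real.sqrt ((p : ℝ) ^ n * R) * ((p : ℝ) * W) := by
    calc R * W ^ 2 = ‖S 0‖ := h0norm.symm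
      _ = ‖∑ c ∈ Finset.univ.erase (0 : ZMod p), S c‖ := by rw [hsplit, norm_neg]
      _ ≤ ∑ c ∈ Finset.univ.erase (0 : ZMod p), ‖S c‖ := norm_sum_le _ _
      _ ≤ ∑ c ∈ Finset.univ.erase (0 : ZMod p),
            Real.sqrt ((p : ℝ) ^ n * R) * ‖∑ z ∈ Z, ψ (c * z)‖ ^ 2 :=
          Finset.sum_le_sum fun c hc => hnorm c (Finset.ne_of_mem_erase hc)
      _ = Real.sqrt ((p : ℝ) ^ n * R)
            * ∑ c ∈ Finset.univ.erase (0 : ZMod p), ‖∑ z ∈ Z, ψ (c * z)‖ ^ 2 :=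
          (Finset.mul_sum _ _ _).symm
      _ ≤ Real.sqrt ((p : ℝ) ^ n * R) * ((p : ℝ) * W) :=
          mul_le_mul_of_nonneg_left hzsum (Real.sqrt_nonneg _)
  -- square and derive contradiction
  have hsq : (R * W ^ 2) * (R * W ^ 2) ≤ ((p : ℝ) ^ (n + 2)) * (R * W ^ 2) := by
    have h1 := mul_self_le_mul_self (by positivity) hmain
    have h2 : (Real.sqrt ((p : ℝ) ^ n * R) * ((p : ℝ) * W))
        * (Real.sqrt ((p : ℝ) ^ n * R) * ((p : ℝ) * W))
        = ((p : ℝ) ^ n * R) * ((p : ℝ) * W) ^ 2 := by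
      rw [show (Real.sqrt ((p : ℝ) ^ n * R) * ((p : ℝ) * W))
          * (Real.sqrt ((p : ℝ) ^ n * R) * ((p : ℝ) * W))
          = (Real.sqrt ((p : ℝ) ^ n * R) * Real.sqrt ((p : ℝ) ^ n * R))
            * ((p : ℝ) * W) ^ 2 by ring]
      rw [Real.mul_self_sqrt (by positivity)]
    calc (R * W ^ 2) * (R * W ^ 2)
        ≤ (Real.sqrt ((p : ℝ) ^ n * R) * ((p : ℝ) * W))
            * (Real.sqrt ((p : ℝ) ^ n * R) * ((p : ℝ) * W)) := h1
      _ = ((p : ℝ) ^ n * R) * ((p : ℝ) * W) ^ 2 := h2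
      _ = ((p : ℝ) ^ (n + 2)) * (R * W ^ 2) := by ring
  have hfinal : R * W ^ 2 ≤ (p : ℝ) ^ (n + 2) :=
    le_of_mul_le_mul_right hsq (by positivity)
  linarith [hbig, hfinal]

end Aux

set_option maxHeartbeats 1000000 in
theorem stmt14 (ε : ℝ) (hε : 0 < ε) (n : ℕ) (hn : 1 / (8 * ε) < (n : ℝ))
    (p : ℕ) [Fact p.Prime]
    (X Y : Fin n → Finset (ZMod p)) (Z : Finset (ZMod p))
    (hX : ∀ i, (X i).Nonempty) (hY : ∀ i, (Y i).Nonempty) (hZ : Z.Nonempty)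
    (hX0 : ∀ i, (0 : ZMod p) ∉ X i) (hY0 : ∀ i, (0 : ZMod p) ∉ Y i)
    (B : Finset (Heis p n))
    (hB : ∀ g : Heis p n, g ∈ B ↔
      ((∀ i, g.1 i ∈ X i) ∧ (∀ i, g.2.1 i ∈ Y i) ∧ g.2.2 ∈ Z))
    (hBcard : (p : ℝ) ^ (3 * (n : ℝ) / 2 + 3 / 4 + ε * (2 * (n : ℝ) + 1)) < (B.card : ℝ)) :
    ∃ a b : Fin n → ZMod p, ∀ z : ZMod p, ((a, b, z) : Heis p n) ∈ B * B := by
  -- basic facts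
  have hp1 : (1 : ℝ) ≤ (p : ℝ) := by exact_mod_cast (Fact.out : p.Prime).one_lt.le
  have hp0 : (0 : ℝ) < p := by exact_mod_cast (Fact.out : p.Prime).pos
  -- pigeonhole choices
  choose a ha using fun i => pigeon (X i)
  choose b hb using fun i => pigeon (Y i)
  set A : Fin n → Finset (ZMod p) := fun i => (X i).filter (fun x => a i - x ∈ X i) with hAdef
  set Bs : Fin n → Finset (ZMod p) := fun i => (Y i).filter (fun y => b i - y ∈ Y i) with hBsdef
  have hAne : ∀ i, (A i).Nonempty := by
    intro i
    rw [← Finset.card_pos]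
    have h1 := ha i
    have hx1 : 0 < (X i).card := Finset.card_pos.mpr (hX i)
    by_contra h
    push_neg at h
    have h0 : ((X i).filter (fun x => a i - x ∈ X i)).card = 0 := Nat.le_zero.mp h
    rw [h0, Nat.mul_zero, Nat.le_zero, pow_eq_zero_iff (two_ne_zero)] at h1
    omega
  have hBne : ∀ i, (Bs i).Nonempty := by
    intro i
    rw [← Finset.card_pos]
    have h1 := hb i
    have hx1 : 0 < (Y i).card := Finset.card_pos.mpr (hY i)
    by_contra h
    push_neg at h
    have h0 : ((Y i).filter (fun y => b i - y ∈ Y i)).card = 0 := Nat.le_zero.mp h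
    rw [h0, Nat.mul_zero, Nat.le_zero, pow_eq_zero_iff (two_ne_zero)] at h1
    omega
  -- cardinality of B
  have hBeq : B = (Fintype.piFinset X ×ˢ Fintype.piFinset Y ×ˢ Z :
      Finset ((Fin n → ZMod p) × (Fin n → ZMod p) × ZMod p)) := by
    ext g
    rw [hB]
    constructor
    · rintro ⟨h1, h2, h3⟩
      exact Finset.mem_product.mpr ⟨Fintype.mem_piFinset.mpr h1,
        Finset.mem_product.mpr ⟨Fintype.mem_piFinset.mpr h2, h3⟩⟩
    · intro hg
      obtain ⟨h1, h23⟩ := Finset.mem_product.mp hg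
      obtain ⟨h2, h3⟩ := Finset.mem_product.mp h23
      exact ⟨Fintype.mem_piFinset.mp h1, Fintype.mem_piFinset.mp h2, h3⟩
  have hBcardeq : (B.card : ℝ)
      = (∏ i, ((X i).card : ℝ)) * (∏ i, ((Y i).card : ℝ)) * Z.card := by
    rw [show B.card = (Fintype.piFinset X ×ˢ Fintype.piFinset Y ×ˢ Z :
        Finset ((Fin n → ZMod p) × (Fin n → ZMod p) × ZMod p)).card from
        congrArg Finset.card hBeq, Finset.card_product, Finset.card_product,
      Fintype.card_piFinset, Fintype.card_piFinset]
    push_cast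
    ring
  -- numeric inequality
  have hZpos : (0:ℝ) < Z.card := by exact_mod_cast Finset.card_pos.mpr hZ
  have hxy : ((B.card : ℝ))^2 ≤ (p:ℝ)^(2*n)
      * ((∏ i, ((A i).card : ℝ) * ((Bs i).card : ℝ)) * ((Z.card : ℝ))^2) := by
    rw [hBcardeq]
    have step : ∀ i, ((X i).card:ℝ)^2 * ((Y i).card:ℝ)^2
        ≤ ((p:ℝ) * (A i).card) * ((p:ℝ) * (Bs i).card) := by
      intro i
      have h1 : ((X i).card:ℝ)^2 ≤ (p:ℝ) * ((A i).card : ℝ) := by exact_mod_cast ha i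
      have h2 : ((Y i).card:ℝ)^2 ≤ (p:ℝ) * ((Bs i).card : ℝ) := by exact_mod_cast hb i
      exact mul_le_mul h1 h2 (by positivity) (by positivity)
    calc ((∏ i, ((X i).card:ℝ)) * (∏ i, ((Y i).card:ℝ)) * (Z.card : ℝ))^2
        = (∏ i, ((X i).card:ℝ)^2 * ((Y i).card:ℝ)^2) * ((Z.card : ℝ))^2 := by
          rw [mul_pow, mul_pow, ← Finset.prod_pow, ← Finset.prod_pow,
            ← Finset.prod_mul_distrib]
      _ ≤ (∏ i, ((p:ℝ) * (A i).card) * ((p:ℝ) * (Bs i).card)) * ((Z.card : ℝ))^2 :=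
          mul_le_mul_of_nonneg_right
            (Finset.prod_le_prod (fun i _ => by positivity) (fun i _ => step i))
            (by positivity)
      _ = (p:ℝ)^(2*n) * ((∏ i, ((A i).card : ℝ) * ((Bs i).card : ℝ)) * ((Z.card : ℝ))^2) := by
          rw [Finset.prod_congr rfl (fun i _ =>
            show ((p:ℝ) * (A i).card) * ((p:ℝ) * (Bs i).card)
              = (p:ℝ)^2 * (((A i).card:ℝ) * ((Bs i).card : ℝ)) from by ring),
            Finset.prod_mul_distrib, Finset.prod_const, Finset.card_univ,
            Fintype.card_fin, ← pow_mul]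
          ring
  have key2 : ((3*n+2 : ℕ) : ℝ) ≤ (3 * (n : ℝ) / 2 + 3 / 4 + ε * (2 * (n : ℝ) + 1))
      + (3 * (n : ℝ) / 2 + 3 / 4 + ε * (2 * (n : ℝ) + 1)) := by
    have h8 : (1:ℝ) < (n:ℝ) * (8*ε) := (div_lt_iff₀ (by positivity)).mp hn
    push_cast
    nlinarith [hε, h8]
  have hlt : (p:ℝ)^(2*n) * (p:ℝ)^(n+2) < (p:ℝ)^(2*n)
      * ((∏ i, ((A i).card : ℝ) * ((Bs i).card : ℝ)) * ((Z.card : ℝ))^2) := by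
    have hE0 : (0:ℝ) < (p:ℝ) ^ (3 * (n : ℝ) / 2 + 3 / 4 + ε * (2 * (n : ℝ) + 1)) :=
      Real.rpow_pos_of_pos hp0 _
    calc (p:ℝ)^(2*n) * (p:ℝ)^(n+2) = (p:ℝ)^(3*n+2) := by rw [← pow_add]; congr 1; ring
      _ = (p:ℝ)^((3*n+2 : ℕ) : ℝ) := (Real.rpow_natCast _ _).symm
      _ ≤ (p:ℝ)^((3 * (n : ℝ) / 2 + 3 / 4 + ε * (2 * (n : ℝ) + 1))
            + (3 * (n : ℝ) / 2 + 3 / 4 + ε * (2 * (n : ℝ) + 1))) :=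
          Real.rpow_le_rpow_of_exponent_le hp1 key2
      _ = (p:ℝ)^(3 * (n : ℝ) / 2 + 3 / 4 + ε * (2 * (n : ℝ) + 1))
            * (p:ℝ)^(3 * (n : ℝ) / 2 + 3 / 4 + ε * (2 * (n : ℝ) + 1)) :=
          Real.rpow_add hp0 _ _
      _ < (B.card : ℝ) * (B.card : ℝ) :=
          mul_lt_mul hBcard hBcard.le hE0 (by positivity)
      _ = ((B.card : ℝ))^2 := (sq _).symm
      _ ≤ _ := hxy
  have hbig : (p:ℝ)^(n+2) < (∏ i, ((A i).card : ℝ) * ((Bs i).card : ℝ))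
      * ((Z.card : ℝ))^2 :=
    lt_of_mul_lt_mul_left hlt (by positivity)
  -- apply the covering lemma and assemble
  refine ⟨a, b, fun z₀ => ?_⟩
  obtain ⟨g, hg, z, hz, z', hz', hsum⟩ := cover n A Bs Z hAne hBne hZ hbig z₀
  have hgi := fun i => Finset.mem_product.mp (Fintype.mem_piFinset.mp hg i)
  have hx1 : ∀ i, (g i).1 ∈ X i := fun i => (Finset.mem_filter.mp (hgi i).1).1
  have hx2 : ∀ i, a i - (g i).1 ∈ X i := fun i => (Finset.mem_filter.mp (hgi i).1).2
  have hy1 : ∀ i, (g i).2 ∈ Y i := fun i => (Finset.mem_filter.mp (hgi i).2).1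
  have hy2 : ∀ i, b i - (g i).2 ∈ Y i := fun i => (Finset.mem_filter.mp (hgi i).2).2
  set g1 : Heis p n := (fun i => (g i).1, fun i => b i - (g i).2, z) with hg1
  set g2 : Heis p n := (fun i => a i - (g i).1, fun i => (g i).2, z') with hg2
  have hm1 : g1 ∈ B := (hB g1).mpr ⟨hx1, hy2, hz⟩
  have hm2 : g2 ∈ B := (hB g2).mpr ⟨hx2, hy1, hz'⟩
  have heq : ((a, b, z₀) : Heis p n) = g1 * g2 := by
    rw [Heis.mul_def, hg1, hg2]
    refine Prod.ext ?_ (Prod.ext ?_ ?_)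
    · funext i
      show a i = (g i).1 + (a i - (g i).1)
      ring
    · funext i
      show b i = (b i - (g i).2) + (g i).2
      ring
    · show z₀ = (∑ i, (g i).1 * (g i).2) + z + z'
      exact hsum.symm
  rw [heq]
  have := Finset.mul_mem_mul (s := B) (t := B) hm1 hm2
  exact this
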